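/- Define J(q) = ∫₀¹ (1+(1−2x)q)/√(x(1−x)(1−qx)) dx for q ∈ ℂ∖[1,∞). Then J(0) = π, lim_{q→1⁻} J(q) = 4, and J maps (−∞,1] onto (−∞,4]; moreover J takes real values on the real segment (−∞,1]. -/

import Mathlib

open Complex Filter Topology

/-- `J(q) = ∫₀¹ (1+(1−2x)q)/√(x(1−x)(1−qx)) dx` (principal branch of the square root). -/
noncomputable def J (q : ℂ) : ℂ :=
  ∫ x in (0:ℝ)..1,
    (1 + (1 - 2 * (x : ℂ)) * q) /
      (((x : ℂ) * (1 - (x : ℂ)) * (1 - q * (x : ℂ))) ^ ((1 : ℂ) / 2))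

namespace JAux

open MeasureTheory Set intervalIntegral
open scoped Interval

noncomputable def f (q x : ℝ) : ℝ := (1 + (1 - 2*x)*q) / Real.sqrt (x*(1-x)*(1-q*x))

noncomputable def F (q : ℝ) : ℝ := ∫ x in (0:ℝ)..1, f q x

noncomputable def g₀ (x : ℝ) : ℝ := (Real.sqrt x)⁻¹ + (Real.sqrt (1-x))⁻¹

lemma g₀_nonneg (x : ℝ) : 0 ≤ g₀ x := by
  unfold g₀; positivity

lemma g₀_int : IntervalIntegrable g₀ volume 0 1 := by
  have h1 : IntervalIntegrable (fun x : ℝ => x ^ (-(1:ℝ)/2)) volume 0 1 :=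
    intervalIntegrable_rpow' (by norm_num)
  have h2 : IntervalIntegrable (fun x : ℝ => (1-x) ^ (-(1:ℝ)/2)) volume 0 1 := by
    have := (intervalIntegrable_rpow' (a := 0) (b := 1) (r := -1/2) (by norm_num)).comp_sub_left 1
    simpa using this.symm
  have hmeas : AEStronglyMeasurable g₀ (volume.restrict (Ι (0:ℝ) 1)) := by
    refine (Measurable.aestronglyMeasurable ?_)
    exact ((Real.continuous_sqrt.measurable).inv).add
      ((Real.continuous_sqrt.comp (by continuity)).measurable.inv)
  refine (h1.add h2).mono_fun hmeas ?_
  filter_upwards [ae_restrict_mem measurableSet_uIoc] with x hx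
  rw [uIoc_of_le (by norm_num : (0:ℝ) ≤ 1)] at hx
  have hx0 : 0 < x := hx.1
  have hx1 : x ≤ 1 := hx.2
  have e1 : (Real.sqrt x)⁻¹ = x ^ (-(1:ℝ)/2) := by
    rw [Real.sqrt_eq_rpow, ← Real.rpow_neg hx0.le]; norm_num
  have e2 : (Real.sqrt (1-x))⁻¹ = (1-x) ^ (-(1:ℝ)/2) := by
    rw [Real.sqrt_eq_rpow, ← Real.rpow_neg (by linarith)]; norm_num
  have hg : g₀ x = x ^ (-(1:ℝ)/2) + (1-x) ^ (-(1:ℝ)/2) := by rw [g₀, e1, e2]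
  rw [Real.norm_eq_abs, _root_.abs_of_nonneg (g₀_nonneg x), hg, Real.norm_eq_abs]
  have : 0 ≤ x ^ (-(1:ℝ)/2) + (1-x) ^ (-(1:ℝ)/2) := add_nonneg (Real.rpow_nonneg hx0.le _) (Real.rpow_nonneg (by linarith) _)
  rw [_root_.abs_of_nonneg this]

/-- `1/√(x(1-x)) ≤ √2 · g₀ x` for `x ∈ [0,1]`. -/
lemma inv_sqrt_mul_le (x : ℝ) (hx0 : 0 ≤ x) (hx1 : x ≤ 1) :
    (Real.sqrt (x*(1-x)))⁻¹ ≤ Real.sqrt 2 * g₀ x := by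
  rcases le_or_gt x (1/2) with h | h
  · have h2 : (1:ℝ)/2 ≤ 1 - x := by linarith
    have : Real.sqrt (x * (1/2)) ≤ Real.sqrt (x * (1-x)) :=
      Real.sqrt_le_sqrt (by nlinarith)
    have hle : (Real.sqrt (x*(1-x)))⁻¹ ≤ (Real.sqrt (x * (1/2)))⁻¹ := by
      rcases eq_or_lt_of_le hx0 with h0 | h0
      · simp [← h0]
      · exact inv_anti₀ (by positivity) this
    refine hle.trans ?_
    have : Real.sqrt (x * (1/2)) = Real.sqrt x * Real.sqrt (1/2) := Real.sqrt_mul hx0 _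
    rw [this, mul_inv]
    have hs : (Real.sqrt (1/2))⁻¹ = Real.sqrt 2 := by
      rw [← Real.sqrt_inv]; norm_num
    rw [mul_comm, hs]
    have : (Real.sqrt x)⁻¹ ≤ g₀ x := by
      unfold g₀; have : 0 ≤ (Real.sqrt (1-x))⁻¹ := by positivity
      linarith
    nlinarith [Real.sqrt_nonneg 2, inv_nonneg.2 (Real.sqrt_nonneg x)]
  · have : Real.sqrt ((1-x) * (1/2)) ≤ Real.sqrt (x * (1-x)) :=
      Real.sqrt_le_sqrt (by nlinarith)
    have hle : (Real.sqrt (x*(1-x)))⁻¹ ≤ (Real.sqrt ((1-x) * (1/2)))⁻¹ := by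
      rcases eq_or_lt_of_le hx1 with h0 | h0
      · simp [h0]
      · exact inv_anti₀ (Real.sqrt_pos.2 (by nlinarith)) this
    refine hle.trans ?_
    have : Real.sqrt ((1-x) * (1/2)) = Real.sqrt (1-x) * Real.sqrt (1/2) :=
      Real.sqrt_mul (by linarith) _
    rw [this, mul_inv]
    have hs : (Real.sqrt (1/2))⁻¹ = Real.sqrt 2 := by
      rw [← Real.sqrt_inv]; norm_num
    rw [mul_comm, hs]
    have : (Real.sqrt (1-x))⁻¹ ≤ g₀ x := by
      unfold g₀; have : 0 ≤ (Real.sqrt x)⁻¹ := by positivity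
      linarith
    nlinarith [Real.sqrt_nonneg 2, inv_nonneg.2 (Real.sqrt_nonneg (1-x))]

/-- generic bound : if `δ ≤ 1 - q x` and `|num| ≤ M` then `|num/√(x(1-x)(1-qx))| ≤ (M/√δ)·√2·g₀ x`. -/
lemma quotient_bound {num δ M q x : ℝ} (hδ : 0 < δ) (hM : 0 ≤ M)
    (hx0 : 0 ≤ x) (hx1 : x ≤ 1) (h1 : δ ≤ 1 - q*x) (hnum : |num| ≤ M) :
    |num / Real.sqrt (x*(1-x)*(1-q*x))| ≤ M / Real.sqrt δ * (Real.sqrt 2 * g₀ x) := by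
  have hP : Real.sqrt (x*(1-x)*(1-q*x)) = Real.sqrt (x*(1-x)) * Real.sqrt (1-q*x) :=
    Real.sqrt_mul (by nlinarith) _
  rw [abs_div, _root_.abs_of_nonneg (Real.sqrt_nonneg _), hP, div_eq_mul_inv, mul_inv]
  have hδ' : Real.sqrt δ ≤ Real.sqrt (1 - q*x) := Real.sqrt_le_sqrt h1
  have h3 : (Real.sqrt (1-q*x))⁻¹ ≤ (Real.sqrt δ)⁻¹ :=
    inv_anti₀ (Real.sqrt_pos.2 hδ) hδ'
  calc |num| * ((Real.sqrt (x*(1-x)))⁻¹ * (Real.sqrt (1-q*x))⁻¹)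
      ≤ M * ((Real.sqrt 2 * g₀ x) * (Real.sqrt δ)⁻¹) := by
        have b1 := inv_sqrt_mul_le x hx0 hx1
        have n1 : (0:ℝ) ≤ (Real.sqrt (x*(1-x)))⁻¹ := by positivity
        have n2 : (0:ℝ) ≤ (Real.sqrt (1-q*x))⁻¹ := by positivity
        have n3 : (0:ℝ) ≤ Real.sqrt 2 * g₀ x := by
          have := g₀_nonneg x; positivity
        have := mul_le_mul b1 h3 n2 n3
        nlinarith [abs_nonneg num, mul_le_mul hnum this (by positivity) hM]
  _ = M / Real.sqrt δ * (Real.sqrt 2 * g₀ x) := by ring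


lemma f_meas (q : ℝ) : Measurable (f q) := by
  unfold f
  exact (by fun_prop : Measurable fun x : ℝ => 1 + (1-2*x)*q).div
    (Real.continuous_sqrt.comp (by continuity)).measurable

lemma num_abs_le (q x : ℝ) (hx0 : 0 ≤ x) (hx1 : x ≤ 1) : |1 + (1-2*x)*q| ≤ 1 + |q| := by
  have h : |(1-2*x)*q| ≤ |q| := by
    rw [abs_mul]
    have : |1-2*x| ≤ 1 := by rw [abs_le]; constructor <;> linarith
    nlinarith [abs_nonneg q, abs_nonneg (1-2*x)]
  calc |1 + (1-2*x)*q| ≤ |(1:ℝ)| + |(1-2*x)*q| := abs_add_le _ _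
  _ ≤ 1 + |q| := by rw [abs_one]; linarith

lemma one_sub_q_mul {q q1 x : ℝ} (hq : q ≤ q1) (hq1 : q1 < 1) (hx0 : 0 ≤ x) (hx1 : x ≤ 1) :
    min 1 (1-q1) ≤ 1 - q*x := by
  rcases le_or_gt q 0 with h | h
  · have : q * x ≤ 0 := mul_nonpos_of_nonpos_of_nonneg h hx0
    have := min_le_left (1:ℝ) (1-q1); linarith
  · have : q * x ≤ q1 := by nlinarith
    have := min_le_right (1:ℝ) (1-q1); linarith

lemma f_abs_bound {q q1 : ℝ} (hq : q ≤ q1) (hq1 : q1 < 1) {x : ℝ} (hx0 : 0 ≤ x) (hx1 : x ≤ 1) :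
    |f q x| ≤ (1 + |q|) / Real.sqrt (min 1 (1-q1)) * (Real.sqrt 2 * g₀ x) :=
  quotient_bound (lt_min one_pos (by linarith)) (by positivity) hx0 hx1
    (one_sub_q_mul hq hq1 hx0 hx1) (num_abs_le q x hx0 hx1)

lemma f_int {q : ℝ} (hq : q < 1) : IntervalIntegrable (f q) volume 0 1 := by
  refine IntervalIntegrable.mono_fun'
    (g := fun x => (1 + |q|) / Real.sqrt (min 1 (1-q)) * (Real.sqrt 2 * g₀ x)) ?_ ?_ ?_
  · exact (g₀_int.const_mul _).const_mul _
  · exact (f_meas q).aestronglyMeasurable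
  · filter_upwards [ae_restrict_mem measurableSet_uIoc] with x hx
    rw [uIoc_of_le (by norm_num : (0:ℝ) ≤ 1)] at hx
    exact (Real.norm_eq_abs _) ▸ f_abs_bound le_rfl hq hx.1.le hx.2

lemma inv_sqrt_int : IntervalIntegrable (fun x : ℝ => (Real.sqrt x)⁻¹) volume 0 1 := by
  refine IntervalIntegrable.mono_fun' g₀_int
    (Real.continuous_sqrt.measurable.inv.aestronglyMeasurable) ?_
  filter_upwards with x
  rw [Real.norm_eq_abs, _root_.abs_of_nonneg (by positivity)]
  unfold g₀
  have : (0:ℝ) ≤ (Real.sqrt (1-x))⁻¹ := by positivity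
  linarith

lemma F_zero : F 0 = Real.pi := by
  have hcongr : ∀ x : ℝ, f 0 x = (Real.sqrt (x*(1-x)))⁻¹ := by
    intro x; unfold f; norm_num [one_div]
  have : F 0 = ∫ x in (0:ℝ)..1, (Real.sqrt (x*(1-x)))⁻¹ := by
    unfold F; exact integral_congr (fun x _ => hcongr x)
  rw [this]
  have hderiv : ∀ x ∈ Ioo (0:ℝ) 1,
      HasDerivWithinAt (fun y : ℝ => Real.arcsin (2*y-1)) ((Real.sqrt (x*(1-x)))⁻¹) (Ioi x) x := by
    intro x hx
    have h₁ : 2*x-1 ≠ -1 := by intro h; nlinarith [hx.1]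
    have h₂ : 2*x-1 ≠ 1 := by intro h; nlinarith [hx.2]
    have hin : HasDerivAt (fun y : ℝ => 2*y-1) 2 x := by
      simpa using ((hasDerivAt_id x).const_mul 2).sub_const 1
    have := (Real.hasDerivAt_arcsin h₁ h₂).comp x hin
    have heq : 1 / Real.sqrt (1 - (2*x-1)^2) * 2 = (Real.sqrt (x*(1-x)))⁻¹ := by
      have h4 : 1 - (2*x-1)^2 = 4 * (x*(1-x)) := by ring
      rw [h4, show (4:ℝ) * (x*(1-x)) = 4 * (x*(1-x)) from rfl,
        Real.sqrt_mul (by norm_num : (0:ℝ) ≤ 4),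
        show Real.sqrt 4 = 2 by
          rw [show (4:ℝ) = 2^2 by norm_num, Real.sqrt_sq (by norm_num : (0:ℝ) ≤ 2)] ]
      rcases eq_or_lt_of_le (Real.sqrt_nonneg (x*(1-x))) with h0 | h0
      · rw [← h0]; simp
      · field_simp
    rw [heq] at this
    exact this.hasDerivWithinAt
  have hcont : ContinuousOn (fun y : ℝ => Real.arcsin (2*y-1)) (Icc 0 1) :=
    (Real.continuous_arcsin.comp (by continuity)).continuousOn
  have hint : IntervalIntegrable (fun x : ℝ => (Real.sqrt (x*(1-x)))⁻¹) volume 0 1 := by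
    refine IntervalIntegrable.mono_fun' (g₀_int.const_mul (Real.sqrt 2))
      ((Real.continuous_sqrt.comp (by continuity)).measurable.inv.aestronglyMeasurable) ?_
    filter_upwards [ae_restrict_mem measurableSet_uIoc] with x hx
    rw [uIoc_of_le (by norm_num : (0:ℝ) ≤ 1)] at hx
    rw [Real.norm_eq_abs, _root_.abs_of_nonneg (by positivity)]
    exact inv_sqrt_mul_le x hx.1.le hx.2
  have := intervalIntegral.integral_eq_sub_of_hasDeriv_right_of_le (by norm_num) hcont hderiv hint
  rw [this]
  norm_num [Real.arcsin_one, Real.arcsin_neg_one]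


lemma ae_ne_one : ∀ᵐ x : ℝ, x ≠ (1:ℝ) := by
  have : volume ({1} : Set ℝ) = 0 := Real.volume_singleton
  rw [ae_iff]
  simpa [Set.setOf_eq_eq_singleton] using this

lemma integral_two_inv_sqrt : ∫ x in (0:ℝ)..1, 2 * (Real.sqrt x)⁻¹ = 4 := by
  have hcont : ContinuousOn (fun y : ℝ => 4 * Real.sqrt y) (Icc 0 1) :=
    (continuous_const.mul Real.continuous_sqrt).continuousOn
  have hderiv : ∀ x ∈ Ioo (0:ℝ) 1,
      HasDerivWithinAt (fun y : ℝ => 4 * Real.sqrt y) (2 * (Real.sqrt x)⁻¹) (Ioi x) x := by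
    intro x hx
    have h := (Real.hasDerivAt_sqrt (ne_of_gt hx.1)).const_mul 4
    have : (4:ℝ) * (1 / (2 * Real.sqrt x)) = 2 * (Real.sqrt x)⁻¹ := by
      have : Real.sqrt x ≠ 0 := Real.sqrt_ne_zero'.2 hx.1
      field_simp; ring
    rw [this] at h
    exact h.hasDerivWithinAt
  have hint : IntervalIntegrable (fun x : ℝ => 2 * (Real.sqrt x)⁻¹) volume 0 1 :=
    inv_sqrt_int.const_mul 2
  have := intervalIntegral.integral_eq_sub_of_hasDeriv_right_of_le (by norm_num) hcont hderiv hint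
  rw [this]; simp

lemma F_one : F 1 = 4 := by
  have hcongr : ∀ᵐ x : ℝ, x ∈ Ι (0:ℝ) 1 → f 1 x = 2 * (Real.sqrt x)⁻¹ := by
    filter_upwards [ae_ne_one] with x hne hx
    rw [uIoc_of_le (by norm_num : (0:ℝ) ≤ 1)] at hx
    have hx0 : 0 < x := hx.1
    have hx1 : x < 1 := lt_of_le_of_ne hx.2 hne
    unfold f
    have h1 : x * (1-x) * (1-1*x) = x * (1-x)^2 := by ring
    rw [h1, Real.sqrt_mul hx0.le, Real.sqrt_sq (by linarith)]
    rw [show 1 + (1-2*x)*1 = 2*(1-x) by ring]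
    have hs : Real.sqrt x ≠ 0 := Real.sqrt_ne_zero'.2 hx0
    have h1x : (1:ℝ)-x ≠ 0 := by linarith
    field_simp
  unfold F
  rw [intervalIntegral.integral_congr_ae hcongr, integral_two_inv_sqrt]

/-- the `q`-derivative of the integrand -/
noncomputable def fq (q x : ℝ) : ℝ :=
  (1 - (3/2 + q/2)*x + q*x^2) / ((1-q*x) * Real.sqrt (x*(1-x)*(1-q*x)))

lemma fq_meas (q : ℝ) : Measurable (fq q) := by
  unfold fq
  exact (by fun_prop : Measurable fun x : ℝ => 1 - (3/2 + q/2)*x + q*x^2).div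
    ((by fun_prop : Measurable fun x : ℝ => (1-q*x)).mul
      (Real.continuous_sqrt.comp (by continuity)).measurable)

lemma one_sub_mul_pos {u x : ℝ} (hu : u < 1) (hx0 : 0 < x) (hx1 : x ≤ 1) :
    0 < 1 - u*x := by
  rcases le_or_gt u 0 with h | h
  · nlinarith
  · nlinarith

lemma hasDerivAt_f {x : ℝ} (hx : x ∈ Ioc (0:ℝ) 1) {u : ℝ} (hu : u < 1) :
    HasDerivAt (fun v => f v x) (fq u x) u := by
  rcases eq_or_lt_of_le hx.2 with h1 | h1
  · subst h1
    have hzero : (fun v => f v (1:ℝ)) = fun _ => (0:ℝ) := by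
      funext v; unfold f; norm_num
    have : fq u 1 = 0 := by unfold fq; norm_num
    rw [hzero, this]
    exact hasDerivAt_const _ _
  · have hx0 : 0 < x := hx.1
    have hc : 0 < x * (1-x) := by nlinarith
    have h1u : 0 < 1 - u*x := one_sub_mul_pos hu hx0 hx.2
    have hP : 0 < x * (1-x) * (1-u*x) := mul_pos hc h1u
    set s := Real.sqrt (x*(1-x)*(1-u*x)) with hs
    have hspos : 0 < s := Real.sqrt_pos.2 hP
    have hs2 : s^2 = x*(1-x)*(1-u*x) := Real.sq_sqrt hP.le
    have hr : HasDerivAt (fun v : ℝ => x*(1-x)*(1-v*x)) (-(x*(1-x)*x)) u := by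
      have h := (((hasDerivAt_id u).mul_const x).const_sub 1).const_mul (x*(1-x))
      have hfun : (fun y : ℝ => x*(1-x)*(1 - id y * x)) = fun v : ℝ => x*(1-x)*(1-v*x) := by
        funext y; simp
      rw [hfun] at h
      refine h.congr_deriv ?_
      ring
    have hden : HasDerivAt (fun v => Real.sqrt (x*(1-x)*(1-v*x))) (-(x*(1-x)*x)/(2*s)) u := by
      have h2 := (Real.hasDerivAt_sqrt (ne_of_gt hP)).comp u hr
      have h3 : (1 / (2 * Real.sqrt (x*(1-x)*(1-u*x)))) * -(x*(1-x)*x) = -(x*(1-x)*x)/(2*s) := by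
        rw [← hs]; ring
      rw [h3] at h2
      exact h2
    have hnum : HasDerivAt (fun v : ℝ => 1 + (1-2*x)*v) (1-2*x) u := by
      simpa using ((hasDerivAt_id u).const_mul (1-2*x)).const_add 1
    have hdiv := hnum.div hden (ne_of_gt hspos)
    have key : ((1-2*x) * s - (1 + (1-2*x)*u) * (-(x*(1-x)*x)/(2*s))) / s^2 = fq u x := by
      unfold fq
      rw [← hs]
      have hNE : ((1-2*x) * s - (1 + (1-2*x)*u) * (-(x*(1-x)*x)/(2*s))) =
          (2*(1-2*x)*(x*(1-x)*(1-u*x)) + (1 + (1-2*x)*u)*(x*(1-x)*x)) / (2*s) := by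
        rw [← hs2]; field_simp; ring
      rw [hNE, div_div]
      rw [div_eq_div_iff (by positivity) (by positivity)]
      linear_combination ((1 - (3/2 + u/2)*x + u*x^2) * 2 * s + (2*x*u + 6*x - 4*x^2*u - 4)*s) * hs2
    rw [key] at hdiv
    exact hdiv

lemma fq_abs_bound {q q1 K x : ℝ} (hq : q ≤ q1) (hq1 : q1 < 1) (hK : |q| ≤ K)
    (hx0 : 0 ≤ x) (hx1 : x ≤ 1) :
    |fq q x| ≤ ((3 + 2*K) / min 1 (1-q1)) / Real.sqrt (min 1 (1-q1)) * (Real.sqrt 2 * g₀ x) := by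
  have hδ : 0 < min 1 (1-q1) := lt_min one_pos (by linarith)
  have hδle : min 1 (1-q1) ≤ 1 - q*x := one_sub_q_mul hq hq1 hx0 hx1
  have hK0 : 0 ≤ K := (abs_nonneg q).trans hK
  have hfq : fq q x = ((1 - (3/2 + q/2)*x + q*x^2) / (1-q*x)) / Real.sqrt (x*(1-x)*(1-q*x)) := by
    unfold fq; rw [div_div]
  rw [hfq]
  refine quotient_bound hδ (by positivity) hx0 hx1 hδle ?_
  have hnum : |1 - (3/2 + q/2)*x + q*x^2| ≤ 3 + 2*K := by
    rw [abs_le] at hK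
    rw [abs_le]
    constructor <;> nlinarith [sq_nonneg x, mul_nonneg hx0 hx0, sq_nonneg (1-x),
      mul_le_mul_of_nonneg_right hK.2 hx0, mul_le_mul_of_nonneg_right hK.1 hx0,
      mul_le_mul_of_nonneg_right (mul_le_mul_of_nonneg_right hK.2 hx0) hx0,
      mul_le_mul_of_nonneg_right (mul_le_mul_of_nonneg_right hK.1 hx0) hx0,
      mul_le_mul_of_nonneg_left hx1 hx0]
  have h1qx : 0 < 1 - q*x := lt_of_lt_of_le hδ hδle
  calc |(1 - (3/2 + q/2)*x + q*x^2) / (1-q*x)| = |1 - (3/2 + q/2)*x + q*x^2| / (1-q*x) := by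
        rw [abs_div, _root_.abs_of_pos h1qx]
  _ ≤ (3 + 2*K) / min 1 (1-q1) :=
      div_le_div₀ (by positivity) hnum hδ hδle

lemma hasDerivAt_F {q : ℝ} (hq : q < 1) :
    HasDerivAt F (∫ x in (0:ℝ)..1, fq q x) q := by
  have hq1 : (1+q)/2 < 1 := by linarith
  have hεpos : 0 < min 1 ((1-q)/2) := lt_min one_pos (by linarith)
  have hball : ∀ u ∈ Metric.ball q (min 1 ((1-q)/2)), u ≤ (1+q)/2 ∧ |u| ≤ |q| + 1 := by
    intro u hu
    rw [Metric.mem_ball, Real.dist_eq] at hu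
    have h1 := abs_lt.mp hu
    have h2 : min 1 ((1-q)/2) ≤ (1-q)/2 := min_le_right _ _
    have h3 : min 1 ((1-q)/2) ≤ 1 := min_le_left _ _
    refine ⟨by linarith [h1.2], ?_⟩
    calc |u| = |q + (u - q)| := by ring_nf
    _ ≤ |q| + |u-q| := abs_add_le _ _
    _ ≤ |q| + 1 := by linarith [h1.1, h1.2, abs_lt.mpr h1]
  have key := intervalIntegral.hasDerivAt_integral_of_dominated_loc_of_deriv_le
    (𝕜 := ℝ) (μ := volume) (F := fun v x => f v x) (F' := fun v x => fq v x) (x₀ := q)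
    (a := 0) (b := 1) (s := Metric.ball q (min 1 ((1-q)/2)))
    (bound := fun x => ((3 + 2*(|q|+1)) / min 1 (1-(1+q)/2)) / Real.sqrt (min 1 (1-(1+q)/2)) *
      (Real.sqrt 2 * g₀ x))
    (Metric.ball_mem_nhds q hεpos)
    (Eventually.of_forall fun u => (f_meas u).aestronglyMeasurable)
    (f_int hq)
    ((fq_meas q).aestronglyMeasurable)
    ?_ ((g₀_int.const_mul _).const_mul _) ?_
  · exact key.2
  · filter_upwards with t ht u hu
    rw [uIoc_of_le (by norm_num : (0:ℝ) ≤ 1)] at ht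
    rw [Real.norm_eq_abs]
    exact fq_abs_bound (by linarith [(hball u hu).1]) hq1 (hball u hu).2 ht.1.le ht.2
  · filter_upwards with t ht u hu
    rw [uIoc_of_le (by norm_num : (0:ℝ) ≤ 1)] at ht
    exact hasDerivAt_f ht (by linarith [(hball u hu).1])

noncomputable def Af (q x : ℝ) : ℝ := (1-x) / (2 * Real.sqrt (x*(1-x)*(1-q*x)))
noncomputable def Wd (q x : ℝ) : ℝ :=
  (1-2*x+q*x^2) / (2*(1-q*x) * Real.sqrt (x*(1-x)*(1-q*x)))
noncomputable def W (q x : ℝ) : ℝ := Real.sqrt (x*(1-x)/(1-q*x))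

lemma fq_eq_add {q : ℝ} (hq : q < 1) {x : ℝ} (hx0 : 0 ≤ x) (hx1 : x ≤ 1) :
    fq q x = Af q x + Wd q x := by
  rcases eq_or_lt_of_le hx0 with h0 | h0
  · unfold fq Af Wd; rw [← h0]; norm_num
  rcases eq_or_lt_of_le hx1 with h1 | h1
  · unfold fq Af Wd; rw [h1]; norm_num
  have h1u : 0 < 1 - q*x := one_sub_mul_pos hq h0 hx1
  have hP : 0 < x * (1-x) * (1-q*x) := by
    have h : 0 < x*(1-x) := by nlinarith
    exact mul_pos h h1u
  unfold fq Af Wd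
  set s := Real.sqrt (x*(1-x)*(1-q*x)) with hs
  have hspos : 0 < s := Real.sqrt_pos.2 hP
  field_simp
  ring

lemma Af_nonneg (q : ℝ) {x : ℝ} (hx1 : x ≤ 1) : 0 ≤ Af q x :=
  div_nonneg (by linarith) (by positivity)

lemma Af_int {q : ℝ} (hq : q < 1) : IntervalIntegrable (Af q) volume 0 1 := by
  refine IntervalIntegrable.mono_fun'
    (g := fun x => ((1:ℝ)/2) / Real.sqrt (min 1 (1-q)) * (Real.sqrt 2 * g₀ x))
    (((g₀_int.const_mul _).const_mul _)) ?_ ?_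
  · refine Measurable.aestronglyMeasurable ?_
    unfold Af
    exact (by fun_prop : Measurable fun x : ℝ => (1-x)).div
      ((by fun_prop : Measurable fun x : ℝ => (2:ℝ)).mul
        (Real.continuous_sqrt.comp (by continuity)).measurable)
  · filter_upwards [ae_restrict_mem measurableSet_uIoc] with x hx
    rw [uIoc_of_le (by norm_num : (0:ℝ) ≤ 1)] at hx
    have heq : Af q x = ((1-x)/2) / Real.sqrt (x*(1-x)*(1-q*x)) := by
      unfold Af; rw [div_div]
    rw [Real.norm_eq_abs, heq]
    refine quotient_bound (lt_min one_pos (by linarith)) (by norm_num) hx.1.le hx.2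
      (one_sub_q_mul le_rfl hq hx.1.le hx.2) ?_
    rw [abs_le]
    constructor <;> nlinarith [hx.1.le, hx.2]

lemma Wd_int {q : ℝ} (hq : q < 1) : IntervalIntegrable (Wd q) volume 0 1 := by
  have hδ : 0 < min 1 (1-q) := lt_min one_pos (by linarith)
  refine IntervalIntegrable.mono_fun'
    (g := fun x => ((3+|q|)/(2*min 1 (1-q))) / Real.sqrt (min 1 (1-q)) * (Real.sqrt 2 * g₀ x))
    (((g₀_int.const_mul _).const_mul _)) ?_ ?_
  · refine Measurable.aestronglyMeasurable ?_
    unfold Wd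
    exact (by fun_prop : Measurable fun x : ℝ => (1-2*x+q*x^2)).div
      ((by fun_prop : Measurable fun x : ℝ => 2*(1-q*x)).mul
        (Real.continuous_sqrt.comp (by continuity)).measurable)
  · filter_upwards [ae_restrict_mem measurableSet_uIoc] with x hx
    rw [uIoc_of_le (by norm_num : (0:ℝ) ≤ 1)] at hx
    have hδle : min 1 (1-q) ≤ 1 - q*x := one_sub_q_mul le_rfl hq hx.1.le hx.2
    have h1qx : 0 < 1 - q*x := lt_of_lt_of_le hδ hδle
    have heq : Wd q x = ((1-2*x+q*x^2)/(2*(1-q*x))) / Real.sqrt (x*(1-x)*(1-q*x)) := by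
      unfold Wd; rw [div_div]
    rw [Real.norm_eq_abs, heq]
    refine quotient_bound hδ (by positivity) hx.1.le hx.2 hδle ?_
    rw [abs_div, _root_.abs_of_pos (by linarith : (0:ℝ) < 2*(1-q*x))]
    have hn : |1-2*x+q*x^2| ≤ 3+|q| := by
      rw [abs_le]
      rcases abs_le.mp (le_refl |q|) with ⟨hq1, hq2⟩
      have hx2 : x^2 ≤ 1 := by nlinarith [hx.1.le, hx.2]
      constructor <;> nlinarith [hx.1.le, hx.2, sq_nonneg x, abs_nonneg q,
        mul_le_mul_of_nonneg_right hq2 (sq_nonneg x), mul_le_mul_of_nonneg_right hq1 (sq_nonneg x),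
        mul_le_mul_of_nonneg_left hx2 (abs_nonneg q)]
    refine div_le_div₀ (by positivity) hn (by linarith) ?_
    nlinarith [hδle, hδ]

lemma W_hasDeriv {q : ℝ} (hq : q < 1) {x : ℝ} (hx : x ∈ Ioo (0:ℝ) 1) :
    HasDerivAt (W q) (Wd q x) x := by
  have hx0 : 0 < x := hx.1
  have hx1 : x < 1 := hx.2
  have h1u : 0 < 1 - q*x := one_sub_mul_pos hq hx0 hx1.le
  have hc : 0 < x*(1-x) := by nlinarith
  have hP : 0 < x*(1-x)*(1-q*x) := mul_pos hc h1u
  set s := Real.sqrt (x*(1-x)*(1-q*x)) with hs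
  have hspos : 0 < s := Real.sqrt_pos.2 hP
  have hs2 : s^2 = x*(1-x)*(1-q*x) := Real.sq_sqrt hP.le
  have hr : HasDerivAt (fun y : ℝ => y*(1-y)/(1-q*y))
      ((1-2*x+q*x^2)/(1-q*x)^2) x := by
    have hnum : HasDerivAt (fun y : ℝ => y*(1-y)) (1-2*x) x := by
      have := (hasDerivAt_id x).mul ((hasDerivAt_id x).const_sub 1)
      refine this.congr_deriv ?_
      simp only [id_eq]
      ring
    have hden : HasDerivAt (fun y : ℝ => 1-q*y) (-q) x := by
      simpa using ((hasDerivAt_id x).const_mul q).const_sub 1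
    have := hnum.div hden (ne_of_gt h1u)
    refine this.congr_deriv ?_
    field_simp
    ring
  have hrx : (0:ℝ) < x*(1-x)/(1-q*x) := by positivity
  have hcomp := (Real.hasDerivAt_sqrt (ne_of_gt hrx)).comp x hr
  have hval : Real.sqrt (x*(1-x)/(1-q*x)) = s / (1-q*x) := by
    have h1 : x*(1-x)/(1-q*x) = (s/(1-q*x))^2 := by
      rw [div_pow, hs2]; field_simp
    rw [h1, Real.sqrt_sq (by positivity)]
  have : 1 / (2 * Real.sqrt (x*(1-x)/(1-q*x))) * ((1-2*x+q*x^2)/(1-q*x)^2) = Wd q x := by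
    rw [hval]
    unfold Wd
    rw [← hs]
    field_simp
  rw [this] at hcomp
  exact hcomp

lemma W_cont {q : ℝ} (hq : q < 1) : ContinuousOn (W q) (Icc 0 1) := by
  unfold W
  refine Real.continuous_sqrt.comp_continuousOn ?_
  refine ContinuousOn.div (by fun_prop) (by fun_prop) ?_
  intro x hx
  exact ne_of_gt (lt_of_lt_of_le (lt_min one_pos (by linarith))
    (one_sub_q_mul le_rfl hq hx.1 hx.2))

lemma integral_Wd {q : ℝ} (hq : q < 1) : ∫ x in (0:ℝ)..1, Wd q x = 0 := by
  have := intervalIntegral.integral_eq_sub_of_hasDeriv_right_of_le (by norm_num : (0:ℝ) ≤ 1)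
    (W_cont hq) (fun x hx => (W_hasDeriv hq hx).hasDerivWithinAt) (Wd_int hq)
  rw [this]
  unfold W
  norm_num

lemma D_nonneg {q : ℝ} (hq : q < 1) : 0 ≤ ∫ x in (0:ℝ)..1, fq q x := by
  have hcongr : ∀ x ∈ uIcc (0:ℝ) 1, fq q x = Af q x + Wd q x := by
    intro x hx
    rw [uIcc_of_le (by norm_num : (0:ℝ) ≤ 1)] at hx
    exact fq_eq_add hq hx.1 hx.2
  rw [intervalIntegral.integral_congr hcongr,
    intervalIntegral.integral_add (Af_int hq) (Wd_int hq), integral_Wd hq, add_zero]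
  exact intervalIntegral.integral_nonneg (by norm_num) (fun u hu => Af_nonneg q hu.2)

lemma f_nonneg_bound {q : ℝ} (hq0 : 0 ≤ q) (hq1 : q ≤ 1) {x : ℝ} (hx : x ∈ Ioc (0:ℝ) 1) :
    |f q x| ≤ 4 * g₀ x := by
  have hx0 : 0 < x := hx.1
  have hx1 : x ≤ 1 := hx.2
  have hqx : q*x ≤ x := by nlinarith [mul_le_mul_of_nonneg_right hq1 hx0.le]
  have h1qx : 0 ≤ 1 - q*x := by linarith
  have hN : 0 ≤ 1 + (1-2*x)*q := by nlinarith
  have hP0 : 0 ≤ x*(1-x)*(1-q*x) :=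
    mul_nonneg (mul_nonneg hx0.le (by linarith)) h1qx
  have habs : |f q x| = f q x := _root_.abs_of_nonneg (div_nonneg hN (Real.sqrt_nonneg _))
  rw [habs]
  have hsplit : f q x = (1-q)/Real.sqrt (x*(1-x)*(1-q*x))
      + (2*q*(1-x))/Real.sqrt (x*(1-x)*(1-q*x)) := by
    unfold f
    rw [← add_div]
    ring_nf
  rw [hsplit]
  have hs1 : Real.sqrt (x*(1-x)*(1-q*x)) = Real.sqrt (x*(1-x)) * Real.sqrt (1-q*x) :=
    Real.sqrt_mul (by nlinarith) _
  rcases eq_or_lt_of_le hx1 with hx1' | hx1'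
  · -- x = 1 : everything is zero
    subst hx1'
    have e : (1:ℝ)*(1-1)*(1-q*1) = 0 := by ring
    rw [e]
    have e2 : (1-q)/Real.sqrt 0 + 2*q*(1-1)/Real.sqrt 0 = 0 := by norm_num
    rw [e2]
    nlinarith [g₀_nonneg 1]
  have ha : 0 < Real.sqrt (x*(1-x)) := Real.sqrt_pos.2 (by nlinarith)
  have h1qxp : 0 < 1 - q*x := by nlinarith
  have hb : 0 < Real.sqrt (1-q*x) := Real.sqrt_pos.2 h1qxp
  have hT1 : (1-q)/Real.sqrt (x*(1-x)*(1-q*x)) ≤ Real.sqrt 2 * g₀ x := by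
    have key : 1 - q ≤ Real.sqrt (1-q*x) := by
      have k1 : 1 - q ≤ Real.sqrt (1-q) := by
        nlinarith [Real.sq_sqrt (by linarith : (0:ℝ) ≤ 1-q), Real.sqrt_nonneg (1-q),
          Real.sqrt_le_one.mpr (by linarith : (1:ℝ)-q ≤ 1)]
      exact k1.trans (Real.sqrt_le_sqrt (by nlinarith))
    rw [hs1]
    have step1 : (1-q)/(Real.sqrt (x*(1-x)) * Real.sqrt (1-q*x)) ≤
        Real.sqrt (1-q*x)/(Real.sqrt (x*(1-x)) * Real.sqrt (1-q*x)) :=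
      (div_le_div_iff_of_pos_right (mul_pos ha hb)).mpr key
    refine step1.trans ?_
    have step2 : Real.sqrt (1-q*x)/(Real.sqrt (x*(1-x)) * Real.sqrt (1-q*x)) =
        (Real.sqrt (x*(1-x)))⁻¹ := by
      rw [mul_comm (Real.sqrt (x*(1-x))) (Real.sqrt (1-q*x)), ← div_div, div_self (ne_of_gt hb), one_div]
    rw [step2]
    exact inv_sqrt_mul_le x hx0.le hx1
  have hT2 : (2*q*(1-x))/Real.sqrt (x*(1-x)*(1-q*x)) ≤ 2 * g₀ x := by
    have h2 : Real.sqrt (x*(1-x)*(1-x)) ≤ Real.sqrt (x*(1-x)*(1-q*x)) :=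
      Real.sqrt_le_sqrt (by nlinarith [mul_nonneg hx0.le (by linarith : (0:ℝ) ≤ 1-x)])
    have hval : Real.sqrt (x*(1-x)*(1-x)) = Real.sqrt x * (1-x) := by
      rw [show x*(1-x)*(1-x) = x*(1-x)^2 by ring, Real.sqrt_mul hx0.le,
        Real.sqrt_sq (by linarith)]
    have hpos : 0 < Real.sqrt (x*(1-x)*(1-x)) := by
      rw [hval]; exact mul_pos (Real.sqrt_pos.2 hx0) (by linarith)
    have hstep : (2*q*(1-x))/Real.sqrt (x*(1-x)*(1-q*x)) ≤
        (2*(1-x))/Real.sqrt (x*(1-x)*(1-x)) := by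
      apply div_le_div₀ (by nlinarith) (by nlinarith) hpos h2
    refine hstep.trans ?_
    rw [hval]
    rw [div_le_iff₀ (mul_pos (Real.sqrt_pos.2 hx0) (by linarith : (0:ℝ) < 1-x))]
    have hg : (Real.sqrt x)⁻¹ ≤ g₀ x := by
      unfold g₀; have : (0:ℝ) ≤ (Real.sqrt (1-x))⁻¹ := by positivity
      linarith
    have hx' : (Real.sqrt x)⁻¹ * Real.sqrt x = 1 :=
      inv_mul_cancel₀ (ne_of_gt (Real.sqrt_pos.2 hx0))
    have hsx : (0:ℝ) ≤ Real.sqrt x := Real.sqrt_nonneg x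
    nlinarith [mul_le_mul_of_nonneg_right hg hsx, g₀_nonneg x]
  have hsq2 : Real.sqrt 2 ≤ 2 := by
    nlinarith [Real.sq_sqrt (by norm_num : (0:ℝ) ≤ 2), Real.sqrt_nonneg 2]
  nlinarith [g₀_nonneg x]

lemma tendsto_F : Tendsto F (𝓝[Iio 1] (1:ℝ)) (𝓝 4) := by
  rw [show (4:ℝ) = F 1 from F_one.symm]
  unfold F
  refine intervalIntegral.tendsto_integral_filter_of_dominated_convergence
    (fun x => 4 * g₀ x) ?_ ?_ ((g₀_int.const_mul 4)) ?_
  · exact Eventually.of_forall fun q => (f_meas q).aestronglyMeasurable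
  · have hev : ∀ᶠ q in 𝓝[Iio 1] (1:ℝ), q ∈ Ioo (0:ℝ) 1 := by
      have h1 : Ioi (0:ℝ) ∈ 𝓝[Iio 1] (1:ℝ) := nhdsWithin_le_nhds (Ioi_mem_nhds one_pos)
      filter_upwards [h1, self_mem_nhdsWithin] with q hq1 hq2
      exact ⟨hq1, hq2⟩
    filter_upwards [hev] with q hq
    filter_upwards with x hx
    rw [uIoc_of_le (by norm_num : (0:ℝ) ≤ 1)] at hx
    rw [Real.norm_eq_abs]
    exact f_nonneg_bound hq.1.le hq.2.le hx
  · filter_upwards [ae_ne_one] with x hne hx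
    rw [uIoc_of_le (by norm_num : (0:ℝ) ≤ 1)] at hx
    have hx1 : x < 1 := lt_of_le_of_ne hx.2 hne
    have hP : 0 < x*(1-x)*(1-1*x) := by
      have h1 : 0 < x*(1-x) := mul_pos hx.1 (by linarith)
      nlinarith
    have hc : ContinuousAt (fun q : ℝ => f q x) 1 := by
      unfold f
      refine ContinuousAt.div (by fun_prop) ?_ ?_
      · exact (Real.continuous_sqrt.continuousAt).comp (by fun_prop)
      · exact ne_of_gt (Real.sqrt_pos.2 hP)
    exact hc.tendsto.mono_left nhdsWithin_le_nhds

lemma F_mono {a b : ℝ} (hab : a ≤ b) (hb : b < 1) : F a ≤ F b := by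
  have hcont : ContinuousOn F (Icc a b) := by
    intro z hz
    exact ((hasDerivAt_F (lt_of_le_of_lt hz.2 hb)).continuousAt).continuousWithinAt
  have hdiff : ∀ z ∈ interior (Icc a b), 0 ≤ deriv F z := by
    intro z hz
    rw [interior_Icc] at hz
    rw [(hasDerivAt_F (by linarith [hz.2] : z < 1)).deriv]
    exact D_nonneg (by linarith [hz.2])
  refine (monotoneOn_of_deriv_nonneg (convex_Icc a b) hcont ?_ hdiff) ?_ ?_ hab
  · intro z hz
    rw [interior_Icc] at hz
    exact ((hasDerivAt_F (by linarith [hz.2] : z < 1)).differentiableAt).differentiableWithinAt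
  · exact ⟨le_refl a, hab⟩
  · exact ⟨hab, le_refl b⟩

lemma F_le_four {q : ℝ} (hq : q ≤ 1) : F q ≤ 4 := by
  rcases eq_or_lt_of_le hq with h | h
  · rw [h, F_one]
  · refine ge_of_tendsto tendsto_F ?_
    have h1 : Ioi q ∈ 𝓝[Iio 1] (1:ℝ) := nhdsWithin_le_nhds (Ioi_mem_nhds h)
    filter_upwards [h1, self_mem_nhdsWithin] with z hz1 hz2
    exact F_mono (le_of_lt hz1) hz2

lemma J_eq {q : ℝ} (hq : q ≤ 1) : J (q : ℂ) = ((F q : ℝ) : ℂ) := by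
  unfold J F
  rw [← intervalIntegral.integral_ofReal]
  refine intervalIntegral.integral_congr ?_
  intro x hx
  dsimp only
  rw [uIcc_of_le (by norm_num : (0:ℝ) ≤ 1)] at hx
  have hqx : q*x ≤ x := by nlinarith [mul_le_mul_of_nonneg_right hq hx.1]
  have ht : 0 ≤ x*(1-x)*(1-q*x) :=
    mul_nonneg (mul_nonneg hx.1 (by linarith [hx.2])) (by linarith [hx.2])
  have hcast : ((x:ℂ) * (1 - (x:ℂ)) * (1 - (q:ℂ) * (x:ℂ))) = ((x*(1-x)*(1-q*x) : ℝ) : ℂ) := by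
    push_cast; ring
  have hpow : ((x*(1-x)*(1-q*x) : ℝ) : ℂ) ^ ((1:ℂ)/2) =
      ((Real.sqrt (x*(1-x)*(1-q*x)) : ℝ) : ℂ) := by
    rw [show ((1:ℂ)/2) = ((1/2 : ℝ) : ℂ) by norm_num]
    rw [← Complex.ofReal_cpow ht]
    rw [Real.sqrt_eq_rpow]
  rw [hcast, hpow]
  unfold f
  push_cast
  ring

lemma integral_inv_sqrt {a : ℝ} (ha : 0 ≤ a) (ha1 : a ≤ 1) :
    ∫ x in (0:ℝ)..a, (Real.sqrt x)⁻¹ = 2 * Real.sqrt a := by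
  rcases eq_or_lt_of_le ha with h | h
  · rw [← h]; simp
  have hcont : ContinuousOn (fun y : ℝ => 2 * Real.sqrt y) (Icc 0 a) :=
    (continuous_const.mul Real.continuous_sqrt).continuousOn
  have hderiv : ∀ x ∈ Ioo (0:ℝ) a,
      HasDerivWithinAt (fun y : ℝ => 2 * Real.sqrt y) ((Real.sqrt x)⁻¹) (Ioi x) x := by
    intro x hx
    have h := (Real.hasDerivAt_sqrt (ne_of_gt hx.1)).const_mul 2
    have e : (2:ℝ) * (1 / (2 * Real.sqrt x)) = (Real.sqrt x)⁻¹ := by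
      have : Real.sqrt x ≠ 0 := Real.sqrt_ne_zero'.2 hx.1
      field_simp
    rw [e] at h
    exact h.hasDerivWithinAt
  have hint : IntervalIntegrable (fun x : ℝ => (Real.sqrt x)⁻¹) volume 0 a := by
    refine inv_sqrt_int.mono_set' ?_
    rw [uIoc_of_le ha, uIoc_of_le (by norm_num : (0:ℝ) ≤ 1)]
    exact Ioc_subset_Ioc le_rfl ha1
  have := intervalIntegral.integral_eq_sub_of_hasDeriv_right_of_le ha hcont hderiv hint
  rw [this]; simp

lemma inv_sqrt_one_sub_int :
    IntervalIntegrable (fun x : ℝ => (Real.sqrt (1-x))⁻¹) volume 0 1 := by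
  refine IntervalIntegrable.mono_fun' g₀_int
    ((Real.continuous_sqrt.comp (by continuity)).measurable.inv.aestronglyMeasurable) ?_
  filter_upwards with x
  rw [Real.norm_eq_abs, _root_.abs_of_nonneg (by positivity)]
  unfold g₀
  have : (0:ℝ) ≤ (Real.sqrt x)⁻¹ := by positivity
  linarith

lemma integral_inv_sqrt_one_sub :
    ∫ x in (0:ℝ)..1, (Real.sqrt (1-x))⁻¹ = 2 := by
  have hcont : ContinuousOn (fun y : ℝ => -(2 * Real.sqrt (1-y))) (Icc 0 1) :=
    ((continuous_const.mul (Real.continuous_sqrt.comp (by continuity))).neg).continuousOn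
  have hderiv : ∀ x ∈ Ioo (0:ℝ) 1,
      HasDerivWithinAt (fun y : ℝ => -(2 * Real.sqrt (1-y))) ((Real.sqrt (1-x))⁻¹) (Ioi x) x := by
    intro x hx
    have hin : HasDerivAt (fun y : ℝ => 1 - y) (-1) x := by
      simpa using (hasDerivAt_id x).const_sub 1
    have h := (((Real.hasDerivAt_sqrt (by nlinarith [hx.2] : (1:ℝ) - x ≠ 0)).comp x hin).const_mul
      2).neg
    have e : -(2 * (1 / (2 * Real.sqrt (1-x)) * -1)) = (Real.sqrt (1-x))⁻¹ := by
      have : Real.sqrt (1-x) ≠ 0 := Real.sqrt_ne_zero'.2 (by nlinarith [hx.2])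
      field_simp
    rw [e] at h
    exact h.hasDerivWithinAt
  have := intervalIntegral.integral_eq_sub_of_hasDeriv_right_of_le (by norm_num) hcont hderiv
    inv_sqrt_one_sub_int
  rw [this]; norm_num

lemma g₀_integral : ∫ x in (0:ℝ)..1, g₀ x = 4 := by
  unfold g₀
  rw [intervalIntegral.integral_add inv_sqrt_int inv_sqrt_one_sub_int,
    integral_inv_sqrt (by norm_num) (by norm_num), integral_inv_sqrt_one_sub]
  norm_num

lemma sqrt_two_le : Real.sqrt 2 ≤ 3/2 := by
  nlinarith [Real.sq_sqrt (by norm_num : (0:ℝ) ≤ 2), Real.sqrt_nonneg 2]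

set_option maxHeartbeats 1000000 in
lemma exists_F_le (y : ℝ) : ∃ q : ℝ, q < 1 ∧ F q ≤ y := by
  obtain ⟨m, hmexp, hm64, hmy⟩ : ∃ m : ℝ, Real.exp 150 ≤ m ∧ (64:ℝ) ≤ m ∧ 4*(1-y)^2+1 ≤ m :=
    ⟨max (Real.exp 150) (max 64 (4*(1-y)^2+1)), le_max_left _ _,
      le_max_of_le_right (le_max_left _ _), le_max_of_le_right (le_max_right _ _)⟩
  have hm0 : (0:ℝ) < m := by linarith
  obtain ⟨s, hs2, hs0⟩ : ∃ s : ℝ, s^2 = m ∧ 0 < s :=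
    ⟨Real.sqrt m, Real.sq_sqrt hm0.le, Real.sqrt_pos.2 hm0⟩
  refine ⟨-m, by linarith, ?_⟩
  have hq1 : (-m : ℝ) < 1 := by linarith
  have h01m : (0:ℝ) < 1/m := by positivity
  have h1m4 : (1:ℝ)/m ≤ 1/4 := by
    rw [div_le_div_iff₀ hm0 (by norm_num)]; linarith
  have h1m1 : (1:ℝ)/m ≤ 1 := by linarith
  have hI : IntervalIntegrable (f (-m)) volume 0 1 := f_int hq1
  have hsub1 : Ι (0:ℝ) (1/m) ⊆ Ι (0:ℝ) 1 := by
    rw [uIoc_of_le h01m.le, uIoc_of_le (by norm_num : (0:ℝ) ≤ 1)]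
    exact Ioc_subset_Ioc le_rfl h1m1
  have hsub2 : Ι ((1:ℝ)/m) (1/4) ⊆ Ι (0:ℝ) 1 := by
    rw [uIoc_of_le h1m4, uIoc_of_le (by norm_num : (0:ℝ) ≤ 1)]
    exact Ioc_subset_Ioc h01m.le (by norm_num)
  have hsub3 : Ι ((1:ℝ)/4) 1 ⊆ Ι (0:ℝ) 1 := by
    rw [uIoc_of_le (by norm_num : (1:ℝ)/4 ≤ 1), uIoc_of_le (by norm_num : (0:ℝ) ≤ 1)]
    exact Ioc_subset_Ioc (by norm_num) le_rfl
  have hsub4 : Ι ((1:ℝ)/m) 1 ⊆ Ι (0:ℝ) 1 := by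
    rw [uIoc_of_le (by linarith : (1:ℝ)/m ≤ 1), uIoc_of_le (by norm_num : (0:ℝ) ≤ 1)]
    exact Ioc_subset_Ioc h01m.le le_rfl
  have hsub0 : Ι (0:ℝ) (1/4) ⊆ Ι (0:ℝ) 1 := by
    rw [uIoc_of_le (by norm_num : (0:ℝ) ≤ 1/4), uIoc_of_le (by norm_num : (0:ℝ) ≤ 1)]
    exact Ioc_subset_Ioc le_rfl (by norm_num)
  have hI1 := hI.mono_set' hsub1
  have hI2 := hI.mono_set' hsub2
  have hI3 := hI.mono_set' hsub3
  have hI4 := hI.mono_set' hsub4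
  have hsplit : F (-m) = (∫ x in (0:ℝ)..(1/m), f (-m) x) + ((∫ x in (1/m:ℝ)..(1/4), f (-m) x)
      + (∫ x in ((1:ℝ)/4)..1, f (-m) x)) := by
    unfold F
    rw [intervalIntegral.integral_add_adjacent_intervals hI2 hI3,
      intervalIntegral.integral_add_adjacent_intervals hI1 hI4]
  rw [hsplit]
  -- Piece 1
  have hB1 : (∫ x in (0:ℝ)..(1/m), f (-m) x) ≤ 1 := by
    have hle : ∀ x ∈ Icc (0:ℝ) (1/m), f (-m) x ≤ Real.sqrt 2 * (Real.sqrt x)⁻¹ := by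
      intro x hx
      have hx2 : x ≤ 1/2 := by linarith [hx.2]
      rcases eq_or_lt_of_le hx.1 with h0 | h0
      · rw [← h0]; unfold f; norm_num
      have hN1 : 1 + (1-2*x)*(-m) ≤ 1 := by nlinarith
      have hPpos : 0 < x*(1-x)*(1-(-m)*x) := by
        have h1 : 0 < 1 - (-m)*x := by nlinarith
        have h2 : 0 < x*(1-x) := by nlinarith
        exact mul_pos h2 h1
      have hs' : 0 < Real.sqrt (x*(1-x)*(1-(-m)*x)) := Real.sqrt_pos.2 hPpos
      rcases le_or_gt (1 + (1-2*x)*(-m)) 0 with hN0 | hN0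
      · refine le_trans (div_nonpos_of_nonpos_of_nonneg hN0 hs'.le) (by positivity)
      have step1 : f (-m) x ≤ 1 / Real.sqrt (x*(1-x)*(1-(-m)*x)) := by
        unfold f
        exact (div_le_div_iff_of_pos_right hs').mpr hN1
      refine step1.trans ?_
      have hcmp : Real.sqrt (x*(1/2)) ≤ Real.sqrt (x*(1-x)*(1-(-m)*x)) := by
        refine Real.sqrt_le_sqrt ?_
        nlinarith [mul_pos h0 (by linarith : (0:ℝ) < 1-x)]
      have hxp : 0 < Real.sqrt (x*(1/2)) := Real.sqrt_pos.2 (by nlinarith)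
      refine (one_div_le_one_div_of_le hxp hcmp).trans ?_
      rw [Real.sqrt_mul h0.le, one_div, mul_inv]
      have hinv : (Real.sqrt (1/2))⁻¹ = Real.sqrt 2 := by
        rw [← Real.sqrt_inv]; norm_num
      rw [mul_comm ((Real.sqrt x)⁻¹) ((Real.sqrt (1/2))⁻¹), hinv]
    have hmono := intervalIntegral.integral_mono_on h01m.le hI1
      ((inv_sqrt_int.mono_set' hsub1).const_mul (Real.sqrt 2)) hle
    refine hmono.trans ?_
    rw [intervalIntegral.integral_const_mul, integral_inv_sqrt h01m.le h1m1]
    have h164 : (1:ℝ)/m ≤ 1/64 := by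
      rw [div_le_div_iff₀ hm0 (by norm_num)]; linarith
    have h18 : Real.sqrt (1/m) ≤ 1/8 := by
      have h8 : Real.sqrt ((1:ℝ)/64) = 1/8 := by
        rw [show (1/64:ℝ) = (1/8)^2 by norm_num, Real.sqrt_sq (by norm_num)]
      calc Real.sqrt (1/m) ≤ Real.sqrt (1/64) := Real.sqrt_le_sqrt h164
      _ = 1/8 := h8
    nlinarith [sqrt_two_le, Real.sqrt_nonneg (1/m), Real.sqrt_nonneg 2]
  -- Piece 2
  have hB2 : (∫ x in ((1:ℝ)/m)..(1/4), f (-m) x) ≤ -(s/6) * Real.log (m/4) := by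
    have hsqrt2 : (1:ℝ) ≤ Real.sqrt 2 := by
      nlinarith [Real.sq_sqrt (by norm_num : (0:ℝ) ≤ 2), Real.sqrt_nonneg 2]
    have hle : ∀ x ∈ Icc ((1:ℝ)/m) (1/4), f (-m) x ≤ -(s/6) * x⁻¹ := by
      intro x hx
      have hx0 : 0 < x := lt_of_lt_of_le h01m hx.1
      have hx4 : x ≤ 1/4 := hx.2
      have hmx : 1 ≤ m*x := by
        have h := mul_le_mul_of_nonneg_left hx.1 hm0.le
        rw [mul_one_div, div_self (ne_of_gt hm0)] at h
        linarith
      have hN : 1 + (1-2*x)*(-m) ≤ -(m/4) := by nlinarith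
      have hN0 : 1 + (1-2*x)*(-m) ≤ 0 := by nlinarith
      have hPpos : 0 < x*(1-x)*(1-(-m)*x) := by
        have h1 : 0 < 1 - (-m)*x := by nlinarith
        have h2 : 0 < x*(1-x) := by nlinarith
        exact mul_pos h2 h1
      have hs' : 0 < Real.sqrt (x*(1-x)*(1-(-m)*x)) := Real.sqrt_pos.2 hPpos
      have hPle : Real.sqrt (x*(1-x)*(1-(-m)*x)) ≤ x*(Real.sqrt 2*s) := by
        have h1 : x*(1-x)*(1-(-m)*x) ≤ 2*m*x^2 := by nlinarith
        have h2 : Real.sqrt (2*m*x^2) = Real.sqrt 2 * s * x := by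
          rw [show 2*m*x^2 = (Real.sqrt 2 * s * x)^2 by
            rw [mul_pow, mul_pow, Real.sq_sqrt (by norm_num : (0:ℝ) ≤ 2), hs2],
            Real.sqrt_sq (by positivity)]
        calc Real.sqrt (x*(1-x)*(1-(-m)*x)) ≤ Real.sqrt (2*m*x^2) := Real.sqrt_le_sqrt h1
        _ = x*(Real.sqrt 2*s) := by rw [h2]; ring
      have hxs2 : 0 < x*(Real.sqrt 2*s) :=
        mul_pos hx0 (mul_pos (by linarith) hs0)
      have stepA : f (-m) x ≤ (1 + (1-2*x)*(-m))/(x*(Real.sqrt 2*s)) := by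
        unfold f
        rw [div_le_div_iff₀ hs' hxs2]
        exact mul_le_mul_of_nonpos_left hPle hN0
      have stepB : (1 + (1-2*x)*(-m))/(x*(Real.sqrt 2*s)) ≤ (-(m/4))/(x*(Real.sqrt 2*s)) :=
        (div_le_div_iff_of_pos_right hxs2).mpr hN
      have stepC : (-(m/4))/(x*(Real.sqrt 2*s)) ≤ -(s/6) * x⁻¹ := by
        rw [show -(s/6) * x⁻¹ = (-(s/6))/x from by ring]
        rw [div_le_div_iff₀ hxs2 hx0]
        have e : -(s/6)*(x*(Real.sqrt 2*s)) = -(Real.sqrt 2*(m*x))/6 := by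
          rw [← hs2]; ring
        have h2 : Real.sqrt 2*(m*x) ≤ (3/2)*(m*x) :=
          mul_le_mul_of_nonneg_right sqrt_two_le (mul_pos hm0 hx0).le
        linarith [e, h2]
      exact stepA.trans (stepB.trans stepC)
    have hcontRHS : IntervalIntegrable (fun x : ℝ => -(s/6) * x⁻¹) volume (1/m) (1/4) := by
      refine ContinuousOn.intervalIntegrable ?_
      refine continuousOn_const.mul (ContinuousOn.inv₀ continuousOn_id ?_)
      intro z hz
      rw [uIcc_of_le h1m4] at hz
      exact ne_of_gt (lt_of_lt_of_le h01m hz.1)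
    have hmono := intervalIntegral.integral_mono_on h1m4 hI2 hcontRHS hle
    refine hmono.trans ?_
    have hval : ∫ x in ((1:ℝ)/m)..(1/4), x⁻¹ = Real.log (m/4) := by
      rw [integral_inv (by rw [uIcc_of_le h1m4]; exact fun h => absurd h.1 (not_le.2 h01m))]
      congr 1
      field_simp
    rw [intervalIntegral.integral_const_mul, hval]
  -- Piece 3
  have hB3 : (∫ x in ((1:ℝ)/4)..1, f (-m) x) ≤ 24*s := by
    have hsqrtm4 : Real.sqrt (m/4) = s/2 := by
      rw [show m/4 = (s/2)^2 from by rw [div_pow, hs2]; norm_num,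
        Real.sqrt_sq (by linarith)]
    have hle : ∀ x ∈ Icc ((1:ℝ)/4) 1, f (-m) x ≤ 6*s * g₀ x := by
      intro x hx
      have hx0 : (0:ℝ) ≤ x := by linarith [hx.1]
      have hδ : (0:ℝ) < m/4 := by linarith
      have hnum : |1 + (1-2*x)*(-m)| ≤ 1 + m := by
        have := num_abs_le (-m) x hx0 hx.2
        rwa [abs_neg, _root_.abs_of_pos hm0] at this
      have h1 : m/4 ≤ 1 - (-m)*x := by
        have := mul_le_mul_of_nonneg_left hx.1 hm0.le
        nlinarith
      have habs := quotient_bound (q := -m) hδ (by linarith : (0:ℝ) ≤ 1+m) hx0 hx.2 h1 hnum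
      have hq4s : (1+m)/Real.sqrt (m/4) ≤ 4*s := by
        rw [hsqrtm4, div_le_iff₀ (by linarith : (0:ℝ) < s/2)]
        nlinarith
      have hchain : (1+m)/Real.sqrt (m/4) * (Real.sqrt 2 * g₀ x) ≤ 6*s*g₀ x := by
        have h2 : (1+m)/Real.sqrt (m/4) * (Real.sqrt 2 * g₀ x) ≤
            4*s * (Real.sqrt 2 * g₀ x) := by
          refine mul_le_mul_of_nonneg_right hq4s ?_
          exact mul_nonneg (Real.sqrt_nonneg 2) (g₀_nonneg x)
        have h3 : 4*s * (Real.sqrt 2 * g₀ x) ≤ 6*s*g₀ x := by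
          have h4 : 4 * Real.sqrt 2 * s ≤ 6*s := by nlinarith [sqrt_two_le]
          have := mul_le_mul_of_nonneg_right h4 (g₀_nonneg x)
          nlinarith [this]
        linarith
      have hfle : f (-m) x ≤ |f (-m) x| := le_abs_self _
      have hshape : |f (-m) x| = |(1 + (1-2*x)*(-m)) / Real.sqrt (x*(1-x)*(1-(-m)*x))| := rfl
      linarith [hfle, hshape ▸ habs, hchain, habs]
    have hmono := intervalIntegral.integral_mono_on (by norm_num) hI3
      ((g₀_int.mono_set' hsub3).const_mul (6*s)) hle
    refine hmono.trans ?_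
    rw [intervalIntegral.integral_const_mul]
    have hadd : (∫ x in (0:ℝ)..(1/4), g₀ x) + (∫ x in ((1:ℝ)/4)..1, g₀ x) = 4 := by
      rw [intervalIntegral.integral_add_adjacent_intervals (g₀_int.mono_set' hsub0)
        (g₀_int.mono_set' hsub3)]
      exact g₀_integral
    have hnn : 0 ≤ ∫ x in (0:ℝ)..(1/4), g₀ x :=
      intervalIntegral.integral_nonneg (by norm_num) (fun u _ => g₀_nonneg u)
    have hg4 : (∫ x in ((1:ℝ)/4)..1, g₀ x) ≤ 4 := by linarith
    nlinarith [hg4, hs0]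
  -- final assembly
  have hlog : (147:ℝ) ≤ Real.log (m/4) := by
    rw [Real.log_div (ne_of_gt hm0) (by norm_num)]
    have h150 : (150:ℝ) ≤ Real.log m := (Real.le_log_iff_exp_le hm0).2 hmexp
    have h4 : Real.log 4 ≤ 3 := by
      have := Real.log_le_sub_one_of_pos (by norm_num : (0:ℝ) < 4)
      linarith
    linarith
  have hfin : -(s/6) * Real.log (m/4) ≤ -(s/6) * 147 := by
    nlinarith [mul_le_mul_of_nonneg_left hlog (by linarith : (0:ℝ) ≤ s/6)]
  have hsy : 2 - 2*y ≤ s := by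
    nlinarith [sq_nonneg (s - (2-2*y)), sq_nonneg (s + (2-2*y))]
  linarith

end JAux

/-- `J(0) = π`, `J(q) → 4` as `q → 1⁻`, `J` is real-valued on `(−∞,1]`, and `J` maps
`(−∞,1]` onto `(−∞,4]`. -/
theorem J_values_on_real_segment :
    J 0 = (Real.pi : ℂ) ∧
    Tendsto (fun q : ℝ => J (q : ℂ)) (nhdsWithin 1 (Set.Iio 1)) (nhds 4) ∧
    (∀ q : ℝ, q ≤ 1 → (J (q : ℂ)).im = 0) ∧
    (fun q : ℝ => (J (q : ℂ)).re) '' Set.Iic 1 = Set.Iic 4 := by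
  refine ⟨?_, ?_, ?_, ?_⟩
  · have h := JAux.J_eq (q := 0) (by norm_num)
    rw [Complex.ofReal_zero] at h
    rw [h, JAux.F_zero]
  · have hev : ∀ᶠ q in 𝓝[Set.Iio (1:ℝ)] 1, ((JAux.F q : ℝ) : ℂ) = J (q:ℂ) := by
      filter_upwards [self_mem_nhdsWithin] with q hq
      exact (JAux.J_eq (le_of_lt hq)).symm
    have h2 : Tendsto (fun q : ℝ => ((JAux.F q : ℝ):ℂ)) (𝓝[Set.Iio 1] 1) (𝓝 ((4:ℝ):ℂ)) :=
      (Complex.continuous_ofReal.continuousAt.tendsto).comp JAux.tendsto_F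
    rw [show ((4:ℝ):ℂ) = (4:ℂ) by norm_num] at h2
    exact h2.congr' hev
  · intro q hq
    rw [JAux.J_eq hq]
    exact Complex.ofReal_im _
  · have himg : ∀ q ∈ Set.Iic (1:ℝ), (J (q:ℂ)).re = JAux.F q := fun q hq => by
      rw [JAux.J_eq hq]; exact Complex.ofReal_re _
    rw [Set.image_congr himg]
    apply Set.Subset.antisymm
    · rintro y ⟨q, hq, rfl⟩
      exact JAux.F_le_four hq
    · intro y hy
      obtain ⟨q0, hq0, hq0y⟩ := JAux.exists_F_le y
      have hcont : ContinuousOn JAux.F (Set.Icc q0 1) := by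
        intro z hz
        rcases eq_or_lt_of_le hz.2 with h1 | h1
        · have h4 : ContinuousWithinAt JAux.F (Set.Iio 1) 1 := by
            show Tendsto JAux.F (𝓝[Set.Iio 1] 1) (𝓝 (JAux.F 1))
            rw [JAux.F_one]
            exact JAux.tendsto_F
          have h5 : ContinuousWithinAt JAux.F (insert 1 (Set.Iio 1)) 1 :=
            continuousWithinAt_insert_self.2 h4
          rw [h1]
          refine h5.mono ?_
          intro w hw
          rcases eq_or_lt_of_le hw.2 with h2 | h2
          · exact Set.mem_insert_iff.2 (Or.inl h2)
          · exact Set.mem_insert_iff.2 (Or.inr h2)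
        · exact ((JAux.hasDerivAt_F h1).continuousAt).continuousWithinAt
      have hy' : y ∈ Set.Icc (JAux.F q0) (JAux.F 1) := by
        rw [JAux.F_one]; exact ⟨hq0y, hy⟩
      obtain ⟨q, hqmem, hqval⟩ := intermediate_value_Icc hq0.le hcont hy'
      exact ⟨q, hqmem.2, hqval⟩
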